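/- Let n ≥ 2 and let a_1, …, a_n be integers with a_i ≥ 2, let E be the loop exponent matrix, and set D = ∏_{k=1}^{n} a_k + (−1)^{n+1}. Then E is invertible and the entries of E^{-1} are: (E^{-1})_{ij} = (−1)^{j−i} (∏_{k=j+1}^{n} a_k)(∏_{k=1}^{i−1} a_k) / D when j ≥ i, and (E^{-1})_{ij} = (−1)^{n+j−i} (∏_{k=j+1}^{i−1} a_k) / D when j < i, where empty products equal 1. -/

import Mathlib

private def Bmat (n : ℕ) (a : ℕ → ℕ) (D : ℚ) : Matrix (Fin n) (Fin n) ℚ :=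
  Matrix.of fun i j =>
    if (i : ℕ) ≤ (j : ℕ) then
      (-1 : ℚ) ^ ((j : ℕ) - (i : ℕ)) *
        ((∏ k ∈ Finset.Ioi j, (a k : ℚ)) * ∏ k ∈ Finset.Iio i, (a k : ℚ)) / D
    else
      (-1 : ℚ) ^ (n + (j : ℕ) - (i : ℕ)) * (∏ k ∈ Finset.Ioo j i, (a k : ℚ)) / D

/-- The loop exponent matrix (diagonal `a i`, superdiagonal `1`,
corner entry `E (n-1) 0 = 1`, other entries `0`) over `ℚ` is invertible, with
inverse entries (writing `D = ∏ a_k + (−1)^{n+1}`):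
`(E⁻¹)_{ij} = (−1)^{j−i} (∏_{k>j} a_k)(∏_{k<i} a_k)/D` for `j ≥ i`, and
`(E⁻¹)_{ij} = (−1)^{n+j−i} (∏_{j<k<i} a_k)/D` for `j < i`.
Indices are `0`-based via `Fin n`; empty products equal `1`. -/
theorem loop_exponent_matrix_inverse {n : ℕ} (hn : 2 ≤ n) (a : ℕ → ℕ)
    (ha : ∀ i < n, 2 ≤ a i)
    (E : Matrix (Fin n) (Fin n) ℚ)
    (hE : ∀ i j : Fin n, E i j =
      if i = j then (a i : ℚ)
      else if (i : ℕ) + 1 = (j : ℕ) then 1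
      else if (i : ℕ) = n - 1 ∧ (j : ℕ) = 0 then 1 else 0)
    (D : ℚ) (hD : D = (∏ k : Fin n, (a k : ℚ)) + (-1) ^ (n + 1)) :
    IsUnit E ∧ ∀ i j : Fin n, E⁻¹ i j =
      if (i : ℕ) ≤ (j : ℕ) then
        (-1 : ℚ) ^ ((j : ℕ) - (i : ℕ)) *
          ((∏ k ∈ Finset.Ioi j, (a k : ℚ)) * ∏ k ∈ Finset.Iio i, (a k : ℚ)) / D
      else
        (-1 : ℚ) ^ (n + (j : ℕ) - (i : ℕ)) * (∏ k ∈ Finset.Ioo j i, (a k : ℚ)) / D := by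
  haveI : NeZero n := ⟨by omega⟩
  set B : Matrix (Fin n) (Fin n) ℚ := Bmat n a D with hBdef
  -- D is nonzero
  have hprod : (4 : ℚ) ≤ ∏ k : Fin n, (a k : ℚ) := by
    calc (4 : ℚ) = 2 ^ 2 := by norm_num
      _ ≤ 2 ^ n := by
          apply pow_le_pow_right₀ (by norm_num) hn
      _ = ∏ _k : Fin n, (2 : ℚ) := by simp
      _ ≤ ∏ k : Fin n, (a k : ℚ) := by
          apply Finset.prod_le_prod (fun _ _ => by norm_num)
          intro k _
          exact_mod_cast ha k k.isLt
  have hD0 : D ≠ 0 := by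
    rcases neg_one_pow_eq_or ℚ (n + 1) with h | h <;> rw [hD, h] <;> intro hc <;> linarith
  -- value of (i+1 : Fin n)
  have hadd : ∀ i : Fin n, ((i + 1 : Fin n) : ℕ) = ((i : ℕ) + 1) % n := by
    intro i
    rw [Fin.add_def]
    simp [Fin.val_one', Nat.mod_eq_of_lt (show 1 < n by omega)]
  have hadd1 : ∀ i : Fin n, (i : ℕ) + 1 < n → ((i + 1 : Fin n) : ℕ) = (i : ℕ) + 1 := by
    intro i h
    rw [hadd, Nat.mod_eq_of_lt h]
  have hadd2 : ∀ i : Fin n, (i : ℕ) + 1 = n → ((i + 1 : Fin n) : ℕ) = 0 := by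
    intro i h
    rw [hadd, h, Nat.mod_self]
  have hne : ∀ i : Fin n, i ≠ i + 1 := by
    intro i h
    have h2 := congrArg Fin.val h
    have hlt := i.isLt
    rcases Nat.lt_or_ge ((i : ℕ) + 1) n with hl | hl
    · rw [hadd1 i hl] at h2; omega
    · rw [hadd2 i (by omega)] at h2; omega
  -- the key step computation
  have hstep : ∀ i j : Fin n, (a i : ℚ) * B i j + B (i + 1) j = if i = j then 1 else 0 := by
    intro i j
    have hiLt := i.isLt
    have hjLt := j.isLt
    simp only [hBdef, Bmat, Matrix.of_apply]
    rcases Nat.lt_or_ge (i : ℕ) (n - 1) with hi | hi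
    · -- i < n - 1
      have ht : ((i + 1 : Fin n) : ℕ) = (i : ℕ) + 1 := hadd1 i (by omega)
      rcases lt_trichotomy (i : ℕ) (j : ℕ) with hij | hij | hij
      · -- i < j
        rw [if_neg (show ¬ i = j from fun h => by rw [h] at hij; omega)]
        rw [if_pos (le_of_lt hij), if_pos (by rw [ht]; omega : ((i + 1 : Fin n) : ℕ) ≤ (j : ℕ))]
        have hQ : (∏ k ∈ Finset.Iio (i + 1 : Fin n), (a k : ℚ))
            = (a i : ℚ) * ∏ k ∈ Finset.Iio i, (a k : ℚ) := by
          have hins : Finset.Iio (i + 1 : Fin n) = insert i (Finset.Iio i) := by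
            ext k
            simp only [Finset.mem_Iio, Finset.mem_insert, Fin.lt_def, Fin.ext_iff, ht]
            omega
          rw [hins, Finset.prod_insert (by simp)]
        have hpow : (j : ℕ) - (i : ℕ) = ((j : ℕ) - ((i + 1 : Fin n) : ℕ)) + 1 := by
          rw [ht]; omega
        rw [hQ, hpow, pow_succ]
        ring
      · -- i = j
        have hij' : i = j := Fin.ext hij
        subst hij'
        rw [if_pos rfl, if_pos (le_refl _), if_neg (by rw [ht]; omega : ¬ ((i + 1 : Fin n) : ℕ) ≤ (i : ℕ))]
        have hIoo : (∏ k ∈ Finset.Ioo i (i + 1 : Fin n), (a k : ℚ)) = 1 := by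
          have : Finset.Ioo i (i + 1 : Fin n) = ∅ := by
            ext k
            simp only [Finset.mem_Ioo, Finset.notMem_empty, iff_false, not_and, Fin.lt_def, ht]
            omega
          rw [this, Finset.prod_empty]
        have hfull : (∏ k : Fin n, (a k : ℚ))
            = (a i : ℚ) * ((∏ k ∈ Finset.Ioi i, (a k : ℚ)) * ∏ k ∈ Finset.Iio i, (a k : ℚ)) := by
          have hu : (Finset.univ : Finset (Fin n)) = Finset.Iio i ∪ insert i (Finset.Ioi i) := by
            ext k
            have := k.isLt
            simp only [Finset.mem_univ, Finset.mem_union, Finset.mem_Iio, Finset.mem_insert,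
              Finset.mem_Ioi, Fin.lt_def, Fin.ext_iff, true_iff]
            omega
          have hdisj : Disjoint (Finset.Iio i) (insert i (Finset.Ioi i)) := by
            rw [Finset.disjoint_left]
            intro k hk hk2
            simp only [Finset.mem_Iio, Fin.lt_def] at hk
            simp only [Finset.mem_insert, Finset.mem_Ioi, Fin.ext_iff, Fin.lt_def] at hk2
            omega
          rw [hu, Finset.prod_union hdisj, Finset.prod_insert (by simp)]
          ring
        have hsign : ((-1 : ℚ)) ^ (n + (i : ℕ) - ((i + 1 : Fin n) : ℕ)) = (-1) ^ (n + 1) := by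
          rw [ht]
          have h1 : n + (i : ℕ) - ((i : ℕ) + 1) = n - 1 := by omega
          have h2 : n + 1 = (n - 1) + 2 := by omega
          rw [h1, h2, pow_add]
          norm_num
        rw [hIoo, hsign, Nat.sub_self, pow_zero]
        have : (a i : ℚ) * (1 * ((∏ k ∈ Finset.Ioi i, (a k : ℚ)) * ∏ k ∈ Finset.Iio i, (a k : ℚ)) / D)
            + (-1 : ℚ) ^ (n + 1) * 1 / D
            = ((a i : ℚ) * ((∏ k ∈ Finset.Ioi i, (a k : ℚ)) * ∏ k ∈ Finset.Iio i, (a k : ℚ))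
              + (-1 : ℚ) ^ (n + 1)) / D := by ring
        rw [this, ← hfull, ← hD, div_self hD0]
      · -- j < i
        rw [if_neg (show ¬ i = j from fun h => by rw [h] at hij; omega)]
        rw [if_neg (by omega : ¬ (i : ℕ) ≤ (j : ℕ)),
          if_neg (by rw [ht]; omega : ¬ ((i + 1 : Fin n) : ℕ) ≤ (j : ℕ))]
        have hRins : (∏ k ∈ Finset.Ioo j (i + 1 : Fin n), (a k : ℚ))
            = (a i : ℚ) * ∏ k ∈ Finset.Ioo j i, (a k : ℚ) := by
          have hins : Finset.Ioo j (i + 1 : Fin n) = insert i (Finset.Ioo j i) := by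
            ext k
            simp only [Finset.mem_Ioo, Finset.mem_insert, Fin.lt_def, Fin.ext_iff, ht]
            omega
          rw [hins, Finset.prod_insert (by simp)]
        have hpow : n + (j : ℕ) - (i : ℕ) = (n + (j : ℕ) - ((i + 1 : Fin n) : ℕ)) + 1 := by
          rw [ht]; omega
        rw [hRins, hpow, pow_succ]
        ring
    · -- i = n - 1
      have hi' : (i : ℕ) = n - 1 := by omega
      have ht : ((i + 1 : Fin n) : ℕ) = 0 := hadd2 i (by omega)
      have hPi : (∏ k ∈ Finset.Ioi i, (a k : ℚ)) = 1 := by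
        have : Finset.Ioi i = ∅ := by
          ext k
          have := k.isLt
          simp only [Finset.mem_Ioi, Finset.notMem_empty, iff_false, Fin.lt_def]
          omega
        rw [this, Finset.prod_empty]
      have hQ0 : (∏ k ∈ Finset.Iio (i + 1 : Fin n), (a k : ℚ)) = 1 := by
        have : Finset.Iio (i + 1 : Fin n) = ∅ := by
          ext k
          simp only [Finset.mem_Iio, Finset.notMem_empty, iff_false, Fin.lt_def, ht]
          omega
        rw [this, Finset.prod_empty]
      rcases eq_or_lt_of_le (show (j : ℕ) ≤ (i : ℕ) by omega) with hij | hij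
      · -- i = j
        have hij' : i = j := Fin.ext hij.symm
        subst hij'
        rw [if_pos rfl, if_pos (le_refl _), if_pos (by rw [ht]; omega : ((i + 1 : Fin n) : ℕ) ≤ (i : ℕ))]
        have hfull : (∏ k : Fin n, (a k : ℚ)) = (a i : ℚ) * ∏ k ∈ Finset.Iio i, (a k : ℚ) := by
          have hu : (Finset.univ : Finset (Fin n)) = insert i (Finset.Iio i) := by
            ext k
            have := k.isLt
            simp only [Finset.mem_univ, Finset.mem_insert, Finset.mem_Iio, Fin.lt_def,
              Fin.ext_iff, true_iff]
            omega
          rw [hu, Finset.prod_insert (by simp)]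
        have hsign : ((-1 : ℚ)) ^ ((i : ℕ) - ((i + 1 : Fin n) : ℕ)) = (-1) ^ (n + 1) := by
          rw [ht]
          have h1 : (i : ℕ) - 0 = n - 1 := by omega
          have h2 : n + 1 = (n - 1) + 2 := by omega
          rw [h1, h2, pow_add]
          norm_num
        rw [hPi, hQ0, hsign, Nat.sub_self, pow_zero]
        have : (a i : ℚ) * (1 * (1 * ∏ k ∈ Finset.Iio i, (a k : ℚ)) / D)
            + (-1 : ℚ) ^ (n + 1) * (1 * 1) / D
            = ((a i : ℚ) * (∏ k ∈ Finset.Iio i, (a k : ℚ)) + (-1 : ℚ) ^ (n + 1)) / D := by ring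
        rw [this, ← hfull, ← hD, div_self hD0]
      · -- j < i = n-1
        rw [if_neg (show ¬ i = j from fun h => by rw [h] at hij; omega)]
        rw [if_neg (by omega : ¬ (i : ℕ) ≤ (j : ℕ)),
          if_pos (by rw [ht]; omega : ((i + 1 : Fin n) : ℕ) ≤ (j : ℕ))]
        have hPins : (∏ k ∈ Finset.Ioi j, (a k : ℚ))
            = (a i : ℚ) * ∏ k ∈ Finset.Ioo j i, (a k : ℚ) := by
          have hins : Finset.Ioi j = insert i (Finset.Ioo j i) := by
            ext k
            have := k.isLt
            simp only [Finset.mem_Ioi, Finset.mem_insert, Finset.mem_Ioo, Fin.lt_def,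
              Fin.ext_iff]
            omega
          rw [hins, Finset.prod_insert (by simp)]
        have hQ0' : (∏ k ∈ Finset.Iio (i + 1 : Fin n), (a k : ℚ)) = 1 := hQ0
        have hpow1 : n + (j : ℕ) - (i : ℕ) = ((j : ℕ) - ((i + 1 : Fin n) : ℕ)) + 1 := by
          rw [ht]; omega
        rw [hPins, hQ0', hpow1, pow_succ]
        ring
  -- E expressed via cyclic successor
  have hE' : ∀ i k : Fin n, E i k =
      if i = k then (a i : ℚ) else if k = i + 1 then 1 else 0 := by
    intro i k
    rw [hE i k]
    by_cases c1 : i = k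
    · rw [if_pos c1, if_pos c1]
    · rw [if_neg c1, if_neg c1]
      by_cases d2 : k = i + 1
      · subst d2
        rw [if_pos rfl]
        rcases Nat.lt_or_ge ((i : ℕ) + 1) n with h | h
        · have hv : ((i + 1 : Fin n) : ℕ) = (i : ℕ) + 1 := hadd1 i h
          rw [if_pos hv.symm]
        · have hv : ((i + 1 : Fin n) : ℕ) = 0 := hadd2 i (by have := i.isLt; omega)
          have hi' : (i : ℕ) = n - 1 := by have := i.isLt; omega
          rw [if_neg (by rw [hv]; omega), if_pos ⟨hi', hv⟩]
      · rw [if_neg d2]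
        have hc2 : ¬ ((i : ℕ) + 1 = (k : ℕ)) := by
          intro h
          exact d2 (Fin.ext (by rw [hadd1 i (by have := k.isLt; omega)]; omega))
        have hc3 : ¬ ((i : ℕ) = n - 1 ∧ (k : ℕ) = 0) := by
          rintro ⟨h1, h2⟩
          exact d2 (Fin.ext (by rw [hadd2 i (by have := i.isLt; omega)]; omega))
        rw [if_neg hc2, if_neg hc3]
  -- E * B = 1
  have hEB : E * B = 1 := by
    ext i j
    rw [Matrix.mul_apply]
    have hterm : ∀ k : Fin n, E i k * B k j =
        (if i = k then (a i : ℚ) * B i j else 0) + (if k = i + 1 then B (i + 1) j else 0) := by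
      intro k
      rw [hE' i k]
      by_cases c1 : i = k
      · subst c1
        rw [if_pos rfl, if_pos rfl, if_neg (hne i), add_zero]
      · rw [if_neg c1, if_neg c1, zero_add]
        by_cases d2 : k = i + 1
        · subst d2
          rw [if_pos rfl, if_pos rfl, one_mul]
        · rw [if_neg d2, if_neg d2, zero_mul]
    rw [Finset.sum_congr rfl (fun k _ => hterm k), Finset.sum_add_distrib,
      Finset.sum_ite_eq Finset.univ i (fun _ => (a i : ℚ) * B i j),
      Finset.sum_ite_eq' Finset.univ (i + 1) (fun _ => B (i + 1) j)]
    simp only [Finset.mem_univ, if_true]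
    rw [hstep i j, Matrix.one_apply]
  refine ⟨?_, ?_⟩
  · exact (Matrix.isUnit_iff_isUnit_det E).mpr (Matrix.isUnit_det_of_right_inverse hEB)
  · intro i j
    rw [Matrix.inv_eq_right_inv hEB]
    rfl
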